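/- A 2×2 complex unitary matrix V₂ satisfies V₂·|+⟩⟨+|·V₂† = |−⟩⟨−| if and only if there exist α, γ ∈ ℝ such that V₂ = e^{iα}·[[i·cos(γ/2), −sin(γ/2)], [sin(γ/2), −i·cos(γ/2)]]. -/

import Mathlib

open Matrix

noncomputable section

/-- The projector |+⟩⟨+|. -/
def Pplus : Matrix (Fin 2) (Fin 2) ℂ := !![1/2, 1/2; 1/2, 1/2]

/-- The projector |−⟩⟨−|. -/
def Pminus : Matrix (Fin 2) (Fin 2) ℂ := !![1/2, -(1/2); -(1/2), 1/2]

private lemma exists_exp_of_mul_conj (z : ℂ) (h : z * (starRingEnd ℂ) z = 1) :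
    ∃ θ : ℝ, z = Complex.exp ((θ : ℂ) * Complex.I) := by
  refine ⟨Complex.arg z, ?_⟩
  have hns : Complex.normSq z = 1 := by
    have := Complex.mul_conj z
    rw [h] at this
    exact_mod_cast this.symm
  have habs : ‖z‖ = 1 := by
    rw [Complex.norm_def, hns, Real.sqrt_one]
  calc z = (‖z‖ : ℂ) * Complex.exp (Complex.arg z * Complex.I) :=
        (Complex.norm_mul_exp_arg_mul_I z).symm
    _ = Complex.exp ((Complex.arg z : ℂ) * Complex.I) := by rw [habs]; simp

private lemma exp_pi_div_two_mul_I' :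
    Complex.exp (((Real.pi/2 : ℝ) : ℂ) * Complex.I) = Complex.I := by
  push_cast
  rw [Complex.exp_mul_I]
  simp [Complex.cos_pi_div_two, Complex.sin_pi_div_two]

private lemma exp_decomp (θ φ : ℝ) :
    Complex.exp ((θ : ℂ) * Complex.I) =
      Complex.exp ((((θ+φ)/2 - Real.pi/2 : ℝ) : ℂ) * Complex.I) *
        Complex.exp ((((θ-φ)/2 : ℝ) : ℂ) * Complex.I) * Complex.I := by
  have h1 : (θ : ℂ) * Complex.I =
      (((θ+φ)/2 - Real.pi/2 : ℝ) : ℂ) * Complex.I + (((θ-φ)/2 : ℝ) : ℂ) * Complex.I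
        + ((Real.pi/2 : ℝ) : ℂ) * Complex.I := by
    push_cast; ring
  rw [h1, Complex.exp_add, Complex.exp_add, exp_pi_div_two_mul_I']

private lemma exp_decomp' (θ φ : ℝ) :
    Complex.exp ((φ : ℂ) * Complex.I) =
      Complex.exp ((((θ+φ)/2 - Real.pi/2 : ℝ) : ℂ) * Complex.I) *
        Complex.exp (-((((θ-φ)/2 : ℝ) : ℂ)) * Complex.I) * Complex.I := by
  have h1 : (φ : ℂ) * Complex.I =
      (((θ+φ)/2 - Real.pi/2 : ℝ) : ℂ) * Complex.I + (-((((θ-φ)/2 : ℝ) : ℂ))) * Complex.I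
        + ((Real.pi/2 : ℝ) : ℂ) * Complex.I := by
    push_cast; ring
  rw [h1, Complex.exp_add, Complex.exp_add, exp_pi_div_two_mul_I']

private lemma Lcos (θ φ : ℝ) :
    Complex.exp ((((θ+φ)/2 - Real.pi/2 : ℝ) : ℂ) * Complex.I) *
        (Complex.I * ((Real.cos ((θ-φ)/2) : ℝ) : ℂ)) =
      (Complex.exp ((θ : ℂ) * Complex.I) + Complex.exp ((φ : ℂ) * Complex.I)) / 2 := by
  rw [Complex.ofReal_cos, Complex.cos, exp_decomp θ φ, exp_decomp' θ φ]
  ring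

private lemma Lsin (θ φ : ℝ) :
    Complex.exp ((((θ+φ)/2 - Real.pi/2 : ℝ) : ℂ) * Complex.I) *
        ((Real.sin ((θ-φ)/2) : ℝ) : ℂ) =
      (Complex.exp ((φ : ℂ) * Complex.I) - Complex.exp ((θ : ℂ) * Complex.I)) / 2 := by
  rw [Complex.ofReal_sin, Complex.sin, exp_decomp θ φ, exp_decomp' θ φ]
  ring

theorem V2_characterization (V₂ : Matrix (Fin 2) (Fin 2) ℂ)
    (hV₂ : V₂ ∈ Matrix.unitaryGroup (Fin 2) ℂ) :
    V₂ * Pplus * V₂ᴴ = Pminus ↔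
      ∃ α γ : ℝ, V₂ = Complex.exp ((α : ℂ) * Complex.I) •
        !![Complex.I * (Real.cos (γ / 2) : ℂ), -(Real.sin (γ / 2) : ℂ);
           (Real.sin (γ / 2) : ℂ), -Complex.I * (Real.cos (γ / 2) : ℂ)] := by
  constructor
  · intro h
    set K := starRingEnd ℂ with hK
    set a := V₂ 0 0 with ha
    set b := V₂ 0 1 with hb
    set c := V₂ 1 0 with hc
    set d := V₂ 1 1 with hd
    have h00 := congrFun (congrFun h 0) 0
    have h01 := congrFun (congrFun h 0) 1
    have h11 := congrFun (congrFun h 1) 1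
    simp [Pplus, Pminus, Matrix.mul_apply, Fin.sum_univ_succ, Matrix.conjTranspose_apply,
      ← ha, ← hb, ← hc, ← hd, ← hK] at h00 h01 h11
    have hUnit : star V₂ * V₂ = 1 := hV₂.1
    have q1 := congrFun (congrFun hUnit 0) 0
    have q2 := congrFun (congrFun hUnit 1) 1
    have q3 := congrFun (congrFun hUnit 0) 1
    simp [Matrix.mul_apply, Fin.sum_univ_succ, Matrix.star_apply, Matrix.conjTranspose_apply,
      Matrix.one_apply, ← ha, ← hb, ← hc, ← hd, ← hK] at q1 q2 q3
    have hs : (a + b) * K (a + b) = 1 := by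
      simp only [map_add]; linear_combination 2 * h00
    have hst : (a + b) * K (c + d) = -1 := by
      simp only [map_add]; linear_combination 2 * h01
    have ht : (c + d) * K (c + d) = 1 := by
      simp only [map_add]; linear_combination 2 * h11
    have hKt_ne : K (c + d) ≠ 0 := by
      intro h0; rw [h0, mul_zero] at ht; exact one_ne_zero ht.symm
    have hKs_ne : K (a + b) ≠ 0 := by
      intro h0; rw [h0, mul_zero] at hs; exact one_ne_zero hs.symm
    have hts : c + d = -(a + b) := by
      have h0 : (c + d + (a + b)) * K (c + d) = 0 := by
        have hst' : K (c + d) * (a + b) = -1 := by linear_combination hst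
        linear_combination ht + hst'
      have h1 := (mul_eq_zero.mp h0).resolve_right hKt_ne
      linear_combination h1
    have hq3' : a * K b + c * K d = 0 := by
      have hq3c := congrArg K q3
      simp only [hK, map_add, _root_.map_mul, Complex.conj_conj, map_zero] at hq3c
      exact hq3c
    have hKts : K (c + d) = -K (a + b) := by rw [hts]; simp
    have e1 : K (a + b) * (a - b) + K (c + d) * (c - d) = 0 := by
      simp only [map_add]
      linear_combination q1 - q2 - q3 + hq3'
    have hwz : a - b = c - d := by
      have key : K (a + b) * ((a - b) - (c - d)) = 0 := by
        linear_combination e1 - (c - d) * hKts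
      have h1 := (mul_eq_zero.mp key).resolve_left hKs_ne
      linear_combination h1
    have hw : (a - b) * K (a - b) = 1 := by
      have e2 : K (a - b) * (a - b) + K (c - d) * (c - d) = 2 := by
        simp only [map_sub]
        linear_combination q1 + q2 - q3 - hq3'
      have hwz' : K (a - b) = K (c - d) := by rw [hwz]
      linear_combination (e2 + K (a - b) * hwz + (c - d) * hwz') / 2
    obtain ⟨θ, hθ⟩ := exists_exp_of_mul_conj _ hs
    obtain ⟨φ, hφ⟩ := exists_exp_of_mul_conj _ hw
    refine ⟨(θ + φ)/2 - Real.pi/2, θ - φ, ?_⟩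
    have hA : a = (Complex.exp ((θ:ℂ) * Complex.I) + Complex.exp ((φ:ℂ) * Complex.I)) / 2 := by
      linear_combination (hθ + hφ) / 2
    have hB : b = (Complex.exp ((θ:ℂ) * Complex.I) - Complex.exp ((φ:ℂ) * Complex.I)) / 2 := by
      linear_combination (hθ - hφ) / 2
    have hC : c = (Complex.exp ((φ:ℂ) * Complex.I) - Complex.exp ((θ:ℂ) * Complex.I)) / 2 := by
      linear_combination (hts - hwz - hθ + hφ) / 2
    have hD : d = -(Complex.exp ((θ:ℂ) * Complex.I) + Complex.exp ((φ:ℂ) * Complex.I)) / 2 := by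
      linear_combination (hts + hwz - hθ - hφ) / 2
    rw [Matrix.eta_fin_two V₂, ← ha, ← hb, ← hc, ← hd, hA, hB, hC, hD]
    ext i j
    fin_cases i <;> fin_cases j <;>
      simp [Matrix.smul_apply, smul_eq_mul]
    · linear_combination (norm := (push_cast; ring_nf)) -(Lcos θ φ)
    · linear_combination (norm := (push_cast; ring_nf)) Lsin θ φ
    · linear_combination (norm := (push_cast; ring_nf)) -(Lsin θ φ)
    · linear_combination (norm := (push_cast; ring_nf)) Lcos θ φ
  · rintro ⟨α, γ, rfl⟩
    have he : Complex.exp ((α : ℂ) * Complex.I) * Complex.exp (-((α : ℂ) * Complex.I)) = 1 := by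
      rw [← Complex.exp_add]; simp
    ext i j
    fin_cases i <;> fin_cases j <;>
      simp [Pplus, Pminus, Matrix.mul_apply, Fin.sum_univ_succ, Matrix.conjTranspose_apply,
        Matrix.smul_apply, smul_eq_mul, _root_.map_mul, Complex.conj_I, Complex.conj_ofReal,
        ← Complex.exp_conj, ← Complex.cos_conj, ← Complex.sin_conj, map_div₀, map_ofNat] <;>
    first
      | linear_combination
          (-(Complex.exp ((α:ℂ)*Complex.I) * Complex.exp (-((α:ℂ)*Complex.I)) *
            Complex.cos ((γ:ℂ)/2)^2)/2) * Complex.I_sq +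
          (Complex.exp ((α:ℂ)*Complex.I) * Complex.exp (-((α:ℂ)*Complex.I))/2) *
            Complex.sin_sq_add_cos_sq ((γ:ℂ)/2) +
          (1/2 : ℂ) * he
      | linear_combination
          ((Complex.exp ((α:ℂ)*Complex.I) * Complex.exp (-((α:ℂ)*Complex.I)) *
            Complex.cos ((γ:ℂ)/2)^2)/2) * Complex.I_sq +
          (-(Complex.exp ((α:ℂ)*Complex.I) * Complex.exp (-((α:ℂ)*Complex.I)))/2) *
            Complex.sin_sq_add_cos_sq ((γ:ℂ)/2) +
          (-1/2 : ℂ) * he
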